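/- Let f₁,…,f_n : ℝ^d → ℝ^d be C¹ bounded maps with bounded Jacobians and Θ = (id+f₁)∘⋯∘(id+f_n). Then ‖∂Θ − I‖_∞ ≤ max{1, exp(Σ_{l=1}^n ‖∂f_l‖_∞)} · Σ_{k=1}^n ‖∂f_k‖_∞. -/

import Mathlib

lemma stmt4_aux {E : Type*} [NormedAddCommGroup E] [NormedSpace ℝ E]
    (L : List ((E → E) × ℝ))
    (h : ∀ p ∈ L, Differentiable ℝ p.1 ∧
      ∀ x, ‖fderiv ℝ p.1 x - ContinuousLinearMap.id ℝ E‖ ≤ p.2) :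
    Differentiable ℝ ((L.map Prod.fst).foldr (· ∘ ·) id) ∧
    ∀ x, ‖fderiv ℝ ((L.map Prod.fst).foldr (· ∘ ·) id) x - ContinuousLinearMap.id ℝ E‖
      ≤ (L.map fun p => 1 + p.2).prod - 1 := by
  induction L with
  | nil =>
    refine ⟨differentiable_id, fun x => ?_⟩
    simp [fderiv_id']
  | cons p L ih =>
    obtain ⟨hd, hF⟩ := ih (fun q hq => h q (List.mem_cons_of_mem _ hq))
    obtain ⟨hpd, hpb⟩ := h p List.mem_cons_self
    set F := (L.map Prod.fst).foldr (· ∘ ·) id with hFdef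
    have hcomp : ((p :: L).map Prod.fst).foldr (· ∘ ·) id = p.1 ∘ F := rfl
    have hdiff : Differentiable ℝ (p.1 ∘ F) := hpd.comp hd
    rw [hcomp]
    refine ⟨hdiff, fun x => ?_⟩
    have hfd : fderiv ℝ (p.1 ∘ F) x = (fderiv ℝ p.1 (F x)).comp (fderiv ℝ F x) :=
      fderiv_comp x (hpd (F x)) (hd x)
    set A := fderiv ℝ p.1 (F x)
    set B := fderiv ℝ F x
    set I := ContinuousLinearMap.id ℝ E
    set P := (L.map fun p => 1 + p.2).prod with hP
    have hsplit : A.comp B - I = (A - I).comp B + (B - I) := by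
      rw [ContinuousLinearMap.sub_comp, ContinuousLinearMap.id_comp]; abel
    have hp2 : (0:ℝ) ≤ p.2 := le_trans (norm_nonneg _) (hpb (F x))
    have hBI : ‖B - I‖ ≤ P - 1 := hF x
    have hB : ‖B‖ ≤ P := by
      have hBe : B = (B - I) + I := by abel
      calc ‖B‖ = ‖(B - I) + I‖ := by rw [← hBe]
        _ ≤ ‖B - I‖ + ‖I‖ := norm_add_le _ _
        _ ≤ (P - 1) + 1 := add_le_add hBI ContinuousLinearMap.norm_id_le
        _ = P := by ring
    calc ‖fderiv ℝ (p.1 ∘ F) x - I‖ = ‖(A - I).comp B + (B - I)‖ := by rw [hfd, hsplit]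
      _ ≤ ‖(A - I).comp B‖ + ‖B - I‖ := norm_add_le _ _
      _ ≤ ‖A - I‖ * ‖B‖ + ‖B - I‖ := by
          gcongr; exact ContinuousLinearMap.opNorm_comp_le _ _
      _ ≤ p.2 * P + (P - 1) :=
          add_le_add (mul_le_mul (hpb (F x)) hB (norm_nonneg B) hp2) hBI
      _ = ((p :: L).map fun p => 1 + p.2).prod - 1 := by simp [hP]; ring

theorem stmt4 {d n : ℕ}
    (f : Fin n → EuclideanSpace ℝ (Fin d) → EuclideanSpace ℝ (Fin d))
    (hf : ∀ k, ContDiff ℝ 1 (f k))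
    (hbdd : ∀ k, BddAbove (Set.range fun x => ‖f k x‖))
    (hbddD : ∀ k, BddAbove (Set.range fun x => ‖fderiv ℝ (f k) x‖))
    (hbij : ∀ k, Function.Bijective (fun x => x + f k x))
    (Θ : EuclideanSpace ℝ (Fin d) → EuclideanSpace ℝ (Fin d))
    (hΘ : Θ = (List.ofFn (fun k => fun x => x + f k x)).foldr (· ∘ ·) id) :
    ∀ x, ‖fderiv ℝ Θ x - ContinuousLinearMap.id ℝ (EuclideanSpace ℝ (Fin d))‖
      ≤ max 1 (Real.exp (∑ l : Fin n, ⨆ y, ‖fderiv ℝ (f l) y‖))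
          * ∑ k : Fin n, ⨆ y, ‖fderiv ℝ (f k) y‖ := by
  intro x
  set M : Fin n → ℝ := fun k => ⨆ y, ‖fderiv ℝ (f k) y‖ with hM
  have hfd : ∀ k, Differentiable ℝ (f k) := fun k => (hf k).differentiable one_ne_zero
  have hMnn : ∀ k, 0 ≤ M k := fun k => le_trans (norm_nonneg _) (le_ciSup (hbddD k) x)
  set L : List ((EuclideanSpace ℝ (Fin d) → EuclideanSpace ℝ (Fin d)) × ℝ) :=
    List.ofFn (fun k => ((fun x => x + f k x), M k)) with hL
  have hmap1 : L.map Prod.fst = List.ofFn (fun k => fun x => x + f k x) := by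
    rw [hL, List.map_ofFn]; rfl
  have haux := stmt4_aux L ?_
  · obtain ⟨_, hbound⟩ := haux
    have hb := hbound x
    rw [hmap1, ← hΘ] at hb
    have hprod : (L.map fun p => 1 + p.2).prod = ∏ k, (1 + M k) := by
      rw [hL, List.map_ofFn, ← List.prod_ofFn]; rfl
    rw [hprod] at hb
    have hS : (0:ℝ) ≤ ∑ k, M k := Finset.sum_nonneg fun k _ => hMnn k
    have h1 : ∏ k, (1 + M k) ≤ Real.exp (∑ k, M k) := by
      rw [Real.exp_sum]
      exact Finset.prod_le_prod (fun k _ => by linarith [hMnn k])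
        (fun k _ => by linarith [Real.add_one_le_exp (M k)])
    have hpos := Real.exp_pos (∑ k, M k)
    have hmul : (1 - ∑ k, M k) * Real.exp (∑ k, M k) ≤ 1 := by
      have h := Real.add_one_le_exp (-(∑ k, M k))
      rw [Real.exp_neg] at h
      calc (1 - ∑ k, M k) * Real.exp (∑ k, M k)
          ≤ (Real.exp (∑ k, M k))⁻¹ * Real.exp (∑ k, M k) :=
            mul_le_mul_of_nonneg_right (by linarith) hpos.le
        _ = 1 := inv_mul_cancel₀ hpos.ne'
    have h2 : Real.exp (∑ k, M k) - 1 ≤ (∑ k, M k) * Real.exp (∑ k, M k) := by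
      nlinarith [hmul]
    calc ‖fderiv ℝ Θ x - ContinuousLinearMap.id ℝ (EuclideanSpace ℝ (Fin d))‖
        ≤ ∏ k, (1 + M k) - 1 := hb
      _ ≤ Real.exp (∑ k, M k) - 1 := by linarith
      _ ≤ (∑ k, M k) * Real.exp (∑ k, M k) := h2
      _ ≤ max 1 (Real.exp (∑ k, M k)) * ∑ k, M k := by
          rw [mul_comm]; exact mul_le_mul_of_nonneg_right (le_max_right _ _) hS
  · rintro p hp
    rw [hL, List.mem_ofFn] at hp
    obtain ⟨k, rfl⟩ := hp
    constructor
    · exact differentiable_id.add (hfd k)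
    · intro y
      have hfe : fderiv ℝ (fun x => x + f k x) y
          = ContinuousLinearMap.id ℝ (EuclideanSpace ℝ (Fin d)) + fderiv ℝ (f k) y := by
        rw [fderiv_fun_add differentiableAt_fun_id (hfd k y), fderiv_id']
      simp only [hfe, add_sub_cancel_left]
      exact le_ciSup (hbddD k) y
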